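/- Let Δ > 0, let t₁ < t₂ < … < t_q be real numbers with t_{m+1} − t_m ≥ Δ for all m, and let G ∈ ℝ^{N×q} have columns g₁, …, g_q. Suppose ϱ : [0, ∞) → [0, ∞) is nonincreasing and satisfies |⟨g_n, g_m⟩| ≤ ϱ(|t_n − t_m|) for all n, m ∈ {1, …, q}, and that the series μ := ϱ(0) + 2·Σ_{m=1}^∞ ϱ(mΔ) converges. Then the spectral norm of G satisfies ‖G‖² ≤ μ. -/

import Mathlib

/-!
STATEMENT 14: Gershgorin/coherence bound on the spectral norm of a matrix with
Δ-separated columns.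

`G : Matrix (Fin N) (Fin q) ℝ` has columns `g_m = G · m` with Euclidean inner products
`⟨g_n, g_m⟩ = Σᵢ G i n · G i m`; its spectral norm comes from the scoped instances of
`Matrix.L2OpNorm`.  The series `Σ_{m=1}^∞ ϱ(mΔ)` is indexed below by `m : ℕ` through
`ϱ((m+1)·Δ)`.
-/

open scoped Matrix.Norms.L2Operator

theorem coherence_gershgorin_bound
    {N q : ℕ} (Δ : ℝ) (hΔ : 0 < Δ)
    (t : Fin q → ℝ) (ht : StrictMono t)
    (hsep : ∀ (m : Fin q) (h : (m : ℕ) + 1 < q), Δ ≤ t ⟨(m : ℕ) + 1, h⟩ - t m)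
    (G : Matrix (Fin N) (Fin q) ℝ)
    (ϱ : ℝ → ℝ)
    (hϱ0 : ∀ s ∈ Set.Ici (0 : ℝ), 0 ≤ ϱ s)
    (hϱanti : AntitoneOn ϱ (Set.Ici (0 : ℝ)))
    (hcorr : ∀ n m : Fin q, |∑ i, G i n * G i m| ≤ ϱ |t n - t m|)
    (hsum : Summable fun m : ℕ => ϱ ((m + 1) * Δ))
    (μ : ℝ) (hμ : μ = ϱ 0 + 2 * ∑' m : ℕ, ϱ ((m + 1) * Δ)) :
    ‖G‖ ^ 2 ≤ μ := by
  classical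
  set f : ℕ → ℝ := fun k => ϱ ((k + 1) * Δ) with hf
  have hfnn : ∀ k, 0 ≤ f k := fun k =>
    hϱ0 _ (Set.mem_Ici.mpr (by positivity))
  have hϱabs : ∀ n m : Fin q, 0 ≤ ϱ |t n - t m| := fun n m =>
    hϱ0 _ (Set.mem_Ici.mpr (abs_nonneg _))
  have hμ0 : 0 ≤ μ := by
    rw [hμ]
    have h1 : (0:ℝ) ≤ ∑' m : ℕ, ϱ ((m + 1) * Δ) := tsum_nonneg hfnn
    have h2 : (0:ℝ) ≤ ϱ 0 := hϱ0 0 (Set.mem_Ici.mpr le_rfl)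
    linarith
  -- separation along indices
  have key : ∀ (d : ℕ) (n : Fin q) (h : (n : ℕ) + d < q),
      (d : ℝ) * Δ ≤ t ⟨(n : ℕ) + d, h⟩ - t n := by
    intro d
    induction d with
    | zero =>
      intro n h
      have e : (⟨(n : ℕ) + 0, h⟩ : Fin q) = n := by ext; simp
      rw [e]; simp
    | succ d ih =>
      intro n h
      have h' : (n : ℕ) + d < q := by omega
      have h1 := hsep ⟨(n : ℕ) + d, h'⟩ (by omega)
      have h2 := ih n h'
      have e : (⟨((⟨(n : ℕ) + d, h'⟩ : Fin q) : ℕ) + 1, by omega⟩ : Fin q)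
          = ⟨(n : ℕ) + (d + 1), h⟩ := by
        apply Fin.ext
        show (n : ℕ) + d + 1 = (n : ℕ) + (d + 1)
        omega
      rw [e] at h1
      push_cast
      have h3 : t ⟨(n : ℕ) + d, h'⟩ - t n ≥ (d : ℝ) * Δ := h2
      have h4 : t ⟨(n : ℕ) + (d + 1), h⟩ - t ⟨(n : ℕ) + d, h'⟩ ≥ Δ := h1
      nlinarith
  -- distance bound for m < n
  have hpt : ∀ n m : Fin q, (m : ℕ) < (n : ℕ) → ϱ |t n - t m| ≤ f ((n : ℕ) - (m : ℕ) - 1) := by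
    intro n m hmn
    have h : (m : ℕ) + ((n : ℕ) - (m : ℕ)) < q := by omega
    have hk := key ((n : ℕ) - (m : ℕ)) m h
    have e : (⟨(m : ℕ) + ((n : ℕ) - (m : ℕ)), h⟩ : Fin q) = n := by
      apply Fin.ext
      show (m : ℕ) + ((n : ℕ) - (m : ℕ)) = (n : ℕ)
      omega
    rw [e] at hk
    have habs : |t n - t m| = t n - t m := by
      have : t m < t n := ht (Fin.lt_def.mpr hmn)
      rw [abs_of_nonneg (by linarith)]
    have hcast : (((n : ℕ) - (m : ℕ) - 1 : ℕ) : ℝ) + 1 = (((n : ℕ) - (m : ℕ) : ℕ) : ℝ) := by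
      have h1 : (n : ℕ) - (m : ℕ) - 1 + 1 = (n : ℕ) - (m : ℕ) := by omega
      exact_mod_cast h1
    have harg : ((((n : ℕ) - (m : ℕ) - 1 : ℕ) : ℝ) + 1) * Δ ≤ |t n - t m| := by
      rw [habs, hcast]; exact hk
    have h0 : (0:ℝ) ≤ ((((n : ℕ) - (m : ℕ) - 1 : ℕ) : ℝ) + 1) * Δ := by positivity
    exact hϱanti (Set.mem_Ici.mpr h0) (Set.mem_Ici.mpr (le_trans h0 harg)) harg
  -- row sums bounded by μ
  have hrow : ∀ n : Fin q, ∑ m : Fin q, ϱ |t n - t m| ≤ μ := by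
    intro n
    rw [← Finset.add_sum_erase _ _ (Finset.mem_univ n)]
    have h0 : ϱ |t n - t n| = ϱ 0 := by simp
    rw [h0]
    rw [← Finset.sum_filter_add_sum_filter_not (Finset.univ.erase n)
      (fun m : Fin q => (m : ℕ) < (n : ℕ))]
    have hb1 : ∑ m ∈ (Finset.univ.erase n).filter (fun m : Fin q => (m : ℕ) < (n : ℕ)),
        ϱ |t n - t m| ≤ ∑' k : ℕ, f k := by
      calc ∑ m ∈ (Finset.univ.erase n).filter (fun m : Fin q => (m : ℕ) < (n : ℕ)), ϱ |t n - t m|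
          ≤ ∑ m ∈ (Finset.univ.erase n).filter (fun m : Fin q => (m : ℕ) < (n : ℕ)),
              f ((n : ℕ) - (m : ℕ) - 1) := by
            apply Finset.sum_le_sum
            intro m hm
            simp only [Finset.mem_filter] at hm
            exact hpt n m hm.2
        _ = ∑ k ∈ ((Finset.univ.erase n).filter (fun m : Fin q => (m : ℕ) < (n : ℕ))).image
              (fun m : Fin q => (n : ℕ) - (m : ℕ) - 1), f k := by
            rw [Finset.sum_image]
            intro a ha b hb hab
            simp only [Finset.mem_coe, Finset.mem_filter] at ha hb
            simp only at hab
            apply Fin.ext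
            omega
        _ ≤ ∑' k : ℕ, f k := Summable.sum_le_tsum _ (fun k _ => hfnn k) hsum
    have hb2 : ∑ m ∈ (Finset.univ.erase n).filter (fun m : Fin q => ¬ (m : ℕ) < (n : ℕ)),
        ϱ |t n - t m| ≤ ∑' k : ℕ, f k := by
      calc ∑ m ∈ (Finset.univ.erase n).filter (fun m : Fin q => ¬ (m : ℕ) < (n : ℕ)), ϱ |t n - t m|
          ≤ ∑ m ∈ (Finset.univ.erase n).filter (fun m : Fin q => ¬ (m : ℕ) < (n : ℕ)),
              f ((m : ℕ) - (n : ℕ) - 1) := by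
            apply Finset.sum_le_sum
            intro m hm
            simp only [Finset.mem_filter, Finset.mem_erase] at hm
            have hne : (m : ℕ) ≠ (n : ℕ) := fun hh => hm.1.1 (Fin.ext hh)
            have hlt : (n : ℕ) < (m : ℕ) := by omega
            have hp := hpt m n hlt
            rwa [abs_sub_comm] at hp
        _ = ∑ k ∈ ((Finset.univ.erase n).filter (fun m : Fin q => ¬ (m : ℕ) < (n : ℕ))).image
              (fun m : Fin q => (m : ℕ) - (n : ℕ) - 1), f k := by
            rw [Finset.sum_image]
            intro a ha b hb hab
            simp only [Finset.mem_coe, Finset.mem_filter, Finset.mem_erase] at ha hb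
            have ha' : (n : ℕ) < (a : ℕ) := by
              have : (a : ℕ) ≠ (n : ℕ) := fun hh => ha.1.1 (Fin.ext hh)
              omega
            have hb' : (n : ℕ) < (b : ℕ) := by
              have : (b : ℕ) ≠ (n : ℕ) := fun hh => hb.1.1 (Fin.ext hh)
              omega
            simp only at hab
            apply Fin.ext
            omega
        _ ≤ ∑' k : ℕ, f k := Summable.sum_le_tsum _ (fun k _ => hfnn k) hsum
    rw [hμ]
    linarith
  -- quadratic form bound
  have hquad : ∀ x : Fin q → ℝ,
      ∑ n, ∑ m, x n * x m * (∑ i, G i n * G i m) ≤ μ * ∑ n, x n ^ 2 := by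
    intro x
    have step1 : ∑ n, ∑ m, x n * x m * (∑ i, G i n * G i m)
        ≤ ∑ n, ∑ m, (x n ^ 2 + x m ^ 2) / 2 * ϱ |t n - t m| := by
      apply Finset.sum_le_sum
      intro n _
      apply Finset.sum_le_sum
      intro m _
      have h1 : x n * x m * (∑ i, G i n * G i m) ≤ |x n| * |x m| * ϱ |t n - t m| := by
        calc x n * x m * (∑ i, G i n * G i m)
            ≤ |x n * x m * (∑ i, G i n * G i m)| := le_abs_self _
          _ = |x n| * |x m| * |∑ i, G i n * G i m| := by rw [abs_mul, abs_mul]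
          _ ≤ |x n| * |x m| * ϱ |t n - t m| :=
              mul_le_mul_of_nonneg_left (hcorr n m) (by positivity)
      have h2 : |x n| * |x m| * ϱ |t n - t m| ≤ (x n ^ 2 + x m ^ 2) / 2 * ϱ |t n - t m| := by
        apply mul_le_mul_of_nonneg_right _ (hϱabs n m)
        nlinarith [sq_nonneg (|x n| - |x m|), sq_abs (x n), sq_abs (x m)]
      linarith
    have step2 : ∑ n, ∑ m, (x n ^ 2 + x m ^ 2) / 2 * ϱ |t n - t m|
        = ∑ n, x n ^ 2 * ∑ m, ϱ |t n - t m| := by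
      have e1 : ∀ n m : Fin q, (x n ^ 2 + x m ^ 2) / 2 * ϱ |t n - t m|
          = x n ^ 2 / 2 * ϱ |t n - t m| + x m ^ 2 / 2 * ϱ |t n - t m| := by
        intro n m; ring
      simp_rw [e1, Finset.sum_add_distrib]
      have hswap : ∑ n : Fin q, ∑ m : Fin q, x m ^ 2 / 2 * ϱ |t n - t m|
          = ∑ n : Fin q, ∑ m : Fin q, x n ^ 2 / 2 * ϱ |t n - t m| := by
        rw [Finset.sum_comm]
        exact Finset.sum_congr rfl fun n _ =>
          Finset.sum_congr rfl fun m _ => by rw [abs_sub_comm]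
      rw [hswap, ← Finset.sum_add_distrib]
      apply Finset.sum_congr rfl
      intro n _
      rw [Finset.mul_sum, ← Finset.sum_add_distrib]
      apply Finset.sum_congr rfl
      intro m _
      ring
    calc ∑ n, ∑ m, x n * x m * (∑ i, G i n * G i m)
        ≤ ∑ n, x n ^ 2 * ∑ m, ϱ |t n - t m| := by rw [← step2]; exact step1
      _ ≤ ∑ n, x n ^ 2 * μ :=
          Finset.sum_le_sum fun n _ => mul_le_mul_of_nonneg_left (hrow n) (sq_nonneg _)
      _ = μ * ∑ n, x n ^ 2 := by rw [← Finset.sum_mul, mul_comm]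
  -- operator norm bound
  have hGle : ‖G‖ ≤ Real.sqrt μ := by
    rw [Matrix.l2_opNorm_def]
    apply ContinuousLinearMap.opNorm_le_bound _ (Real.sqrt_nonneg μ)
    intro x
    show ‖Matrix.toEuclideanLin G x‖ ≤ Real.sqrt μ * ‖x‖
    have hnx : ‖x‖ ^ 2 = ∑ m, x m ^ 2 := by
      rw [EuclideanSpace.norm_eq, Real.sq_sqrt (by positivity)]
      simp [Real.norm_eq_abs, sq_abs]
    have hyapp : ∀ i, (Matrix.toEuclideanLin G x) i = ∑ m, G i m * x m := fun i => rfl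
    have hny : ‖Matrix.toEuclideanLin G x‖ ^ 2 ≤ μ * ‖x‖ ^ 2 := by
      rw [EuclideanSpace.norm_eq, Real.sq_sqrt (by positivity), hnx]
      have expand : ∑ i, ‖(Matrix.toEuclideanLin G x) i‖ ^ 2
          = ∑ n, ∑ m, x n * x m * (∑ i, G i n * G i m) := by
        simp only [hyapp, Real.norm_eq_abs, sq_abs]
        simp_rw [sq, Finset.sum_mul_sum]
        rw [Finset.sum_comm]
        apply Finset.sum_congr rfl
        intro n _
        rw [Finset.sum_comm]
        apply Finset.sum_congr rfl
        intro m _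
        rw [Finset.mul_sum]
        apply Finset.sum_congr rfl
        intro i _
        ring
      rw [expand]
      exact hquad x
    calc ‖Matrix.toEuclideanLin G x‖
        = Real.sqrt (‖Matrix.toEuclideanLin G x‖ ^ 2) :=
          (Real.sqrt_sq (norm_nonneg _)).symm
      _ ≤ Real.sqrt (μ * ‖x‖ ^ 2) := Real.sqrt_le_sqrt hny
      _ = Real.sqrt μ * ‖x‖ := by
          rw [Real.sqrt_mul hμ0, Real.sqrt_sq (norm_nonneg _)]
  calc ‖G‖ ^ 2 ≤ Real.sqrt μ ^ 2 := pow_le_pow_left₀ (norm_nonneg _) hGle 2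
    _ = μ := Real.sq_sqrt hμ0
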